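/- arXiv:2211.15934 — 3 statements merged into one kernel-verified Lean document; each statement's English description precedes it below -/
import Mathlib

section
/- Let (Ω, ℱ, ℙ) be a probability space with a discrete-time filtration (ℱ'_k)_{k=0,...,J} and random variables W'_0,...,W'_J where each W'_k is ℱ'_k-measurable and integrable. Let 𝒢'_k = ℱ'_k ∨ σ(Ȳ) for a fixed random vector Ȳ. If for every k, E[W'_k | ℱ'_{k-1} ∨ σ(Ȳ)] = E[W'_k | ℱ'_{k-1}] almost surely (discrete-time sequential exchangeability), and W'_k = W'_0 + M_k + A_k is the Doob decomposition of W' with respect to (ℱ'_k) (M a martingale, A predictable), then M is also a martingale with respect to the enlarged filtration (𝒢'_k). -/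
open MeasureTheory ProbabilityTheory Filter Set

/-- In discrete time, under sequential exchangeability
`E[W'_k | ℱ'_{k-1} ∨ σ(Ȳ)] = E[W'_k | ℱ'_{k-1}]`, the martingale part `M` of the Doob
decomposition of `W'` with respect to `(ℱ'_k)` remains a martingale with respect to the
initially enlarged filtration `𝒢'_k = ℱ'_k ∨ σ(Ȳ)`. -/
theorem martingalePart_martingale_enlarged
    {Ω E : Type*} {m0 : MeasurableSpace Ω} [MeasurableSpace E]
    (μ : Measure Ω) [IsProbabilityMeasure μ]
    (ℱ 𝒢 : Filtration ℕ m0)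
    (Ybar : Ω → E) (hYbar : Measurable Ybar)
    (h𝒢 : ∀ k, 𝒢 k = ℱ k ⊔ MeasurableSpace.comap Ybar inferInstance)
    (W M A : ℕ → Ω → ℝ)
    (hW_adapted : Adapted ℱ W) (hW_int : ∀ k, Integrable (W k) μ)
    (hdecomp : ∀ k ω, W k ω = W 0 ω + M k ω + A k ω)
    (hM : Martingale M ℱ μ) (hM0 : ∀ ω, M 0 ω = 0) (hA0 : ∀ ω, A 0 ω = 0)
    (hA_pred : ∀ k, StronglyMeasurable[ℱ k] (A (k + 1)))
    (hA_int : ∀ k, Integrable (A k) μ)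
    (hexch : ∀ k, 1 ≤ k → μ[W k|𝒢 (k - 1)] =ᵐ[μ] μ[W k|ℱ (k - 1)]) :
    Martingale M 𝒢 μ := by
  have hle : ∀ k, ℱ k ≤ 𝒢 k := fun k => (h𝒢 k) ▸ le_sup_left
  have hMeq : ∀ k, M k = fun ω => W k ω - W 0 ω - A k ω := by
    intro k; funext ω; have := hdecomp k ω; linarith
  refine martingale_nat (fun k => ((hM.stronglyAdapted k).mono (hle k))) hM.integrable fun k => ?_
  have hM1 : M (k + 1) = W (k + 1) - W 0 - A (k + 1) := by
    funext ω; simp [hMeq (k + 1)]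
  -- conditional expectation w.r.t. 𝒢 k
  have hWexch := hexch (k + 1) (Nat.le_add_left 1 k)
  simp only [Nat.add_sub_cancel] at hWexch
  have hW0meas : StronglyMeasurable[ℱ k] (W 0) :=
    ((hW_adapted 0).mono (ℱ.mono (Nat.zero_le k)) le_rfl).stronglyMeasurable
  have hcG : μ[M (k + 1)|𝒢 k] =ᵐ[μ] μ[W (k + 1)|ℱ k] - W 0 - A (k + 1) := by
    rw [hM1]
    calc μ[W (k + 1) - W 0 - A (k + 1)|𝒢 k]
        =ᵐ[μ] μ[W (k + 1)|𝒢 k] - μ[W 0|𝒢 k] - μ[A (k + 1)|𝒢 k] := by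
          refine (condExp_sub ((hW_int (k + 1)).sub (hW_int 0)) (hA_int (k + 1)) (m := 𝒢 k)).trans ?_
          filter_upwards [condExp_sub (hW_int (k + 1)) (hW_int 0)
            (m := 𝒢 k) (μ := μ)] with ω h
          simp [h]
      _ =ᵐ[μ] μ[W (k + 1)|ℱ k] - W 0 - A (k + 1) := by
          rw [condExp_of_stronglyMeasurable (𝒢.le k) (hW0meas.mono (hle k)) (hW_int 0),
            condExp_of_stronglyMeasurable (𝒢.le k) ((hA_pred k).mono (hle k)) (hA_int (k + 1))]
          filter_upwards [hWexch] with ω h1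
          simp [h1]
  have hcF : μ[M (k + 1)|ℱ k] =ᵐ[μ] μ[W (k + 1)|ℱ k] - W 0 - A (k + 1) := by
    rw [hM1]
    calc μ[W (k + 1) - W 0 - A (k + 1)|ℱ k]
        =ᵐ[μ] μ[W (k + 1)|ℱ k] - μ[W 0|ℱ k] - μ[A (k + 1)|ℱ k] := by
          refine (condExp_sub ((hW_int (k + 1)).sub (hW_int 0)) (hA_int (k + 1)) (m := ℱ k)).trans ?_
          filter_upwards [condExp_sub (hW_int (k + 1)) (hW_int 0)
            (m := ℱ k) (μ := μ)] with ω h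
          simp [h]
      _ =ᵐ[μ] μ[W (k + 1)|ℱ k] - W 0 - A (k + 1) := by
          rw [condExp_of_stronglyMeasurable (ℱ.le k) hW0meas (hW_int 0),
            condExp_of_stronglyMeasurable (ℱ.le k) (hA_pred k) (hA_int (k + 1))]
  have := hM.condExp_ae_eq (Nat.le_succ k)
  filter_upwards [hcG, hcF, this] with ω h1 h2 h3
  simp only [Pi.sub_apply] at h1 h2 h3 ⊢
  rw [h1]
  have := h3.symm
  rw [h2] at this
  linarith
end

section
/- Let (ℱ'_k) be a discrete-time filtration and 𝒢'_k = ℱ'_k ∨ σ(Ȳ) an initially enlarged filtration. Suppose M is an (ℱ'_k)-adapted integrable process satisfying E[M_k | 𝒢'_{k-1}] = E[M_k | ℱ'_{k-1}] a.s. for all k. If τ is an (ℱ'_k)-stopping time taking values in {0,1,...,J} and M is an (ℱ'_k)-local martingale localized by stopping times of this type, then for any such stopping time τ the stopped process M^τ satisfies E[M^τ_k | 𝒢'_{k-1}] = M^τ_{k-1} a.s., i.e., M^τ is a (𝒢'_k)-martingale. -/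
open MeasureTheory ProbabilityTheory Filter Set

/-- Discrete time, enlarged filtration `𝒢_k = ℱ_k ∨ σ(Ȳ)`.
If `M` is `(ℱ_k)`-adapted, integrable, satisfies
`E[M_k | 𝒢_{k-1}] = E[M_k | ℱ_{k-1}]` a.s. for all `k ≥ 1`, and `τ` is an
`(ℱ_k)`-stopping time with values in `{0, …, J}` such that the stopped process `M^τ`
is an `(ℱ_k)`-martingale (localization), then
`E[M^τ_k | 𝒢_{k-1}] = M^τ_{k-1}` a.s. for all `k ≥ 1`, i.e. `M^τ` is a `(𝒢_k)`-martingale. -/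
theorem stoppedProcess_martingale_enlarged
    {Ω E : Type*} {m0 : MeasurableSpace Ω} [MeasurableSpace E]
    (μ : Measure Ω) [IsProbabilityMeasure μ]
    (ℱ 𝒢 : Filtration ℕ m0) (J : ℕ)
    (Ybar : Ω → E) (hYbar : Measurable Ybar)
    (h𝒢 : ∀ k, 𝒢 k = ℱ k ⊔ MeasurableSpace.comap Ybar inferInstance)
    (M : ℕ → Ω → ℝ)
    (hM_adapted : Adapted ℱ M) (hM_int : ∀ k, Integrable (M k) μ)
    (hexch : ∀ k, 1 ≤ k → μ[M k|𝒢 (k - 1)] =ᵐ[μ] μ[M k|ℱ (k - 1)])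
    (τ : Ω → ℕ) (hτ : IsStoppingTime ℱ (fun ω => (τ ω : WithTop ℕ))) (hτ_le : ∀ ω, τ ω ≤ J)
    (hMτ : Martingale (stoppedProcess M (fun ω => (τ ω : WithTop ℕ))) ℱ μ) :
    (∀ k, 1 ≤ k →
      μ[stoppedProcess M (fun ω => (τ ω : WithTop ℕ)) k|𝒢 (k - 1)] =ᵐ[μ] stoppedProcess M (fun ω => (τ ω : WithTop ℕ)) (k - 1)) ∧
    Martingale (stoppedProcess M (fun ω => (τ ω : WithTop ℕ))) 𝒢 μ := by
  have hFG : ∀ k, ℱ k ≤ 𝒢 k := fun k => (h𝒢 k) ▸ le_sup_left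
  -- the key one-step property
  have key : ∀ k : ℕ, μ[stoppedProcess M (fun ω => (τ ω : WithTop ℕ)) (k + 1)|𝒢 k] =ᵐ[μ] stoppedProcess M (fun ω => (τ ω : WithTop ℕ)) k := by
    intro k
    set s : Set Ω := {ω | k + 1 ≤ τ ω} with hs_def
    have hsF : MeasurableSet[ℱ k] s := by
      have h1 : MeasurableSet[ℱ k] {ω | τ ω ≤ k} := by simpa using hτ.measurableSet_le k
      have h2 : s = {ω | τ ω ≤ k}ᶜ := by
        ext ω; simp only [hs_def, Set.mem_setOf_eq, Set.mem_compl_iff, not_le]; omega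
      rw [h2]; exact h1.compl
    have hs0 : MeasurableSet s := ℱ.le k s hsF
    set D : Ω → ℝ := fun ω => M (k + 1) ω - M k ω with hD_def
    have hD_int : Integrable D μ := (hM_int (k + 1)).sub (hM_int k)
    have hind_int : Integrable (s.indicator D) μ := hD_int.indicator hs0
    have hdecomp : stoppedProcess M (fun ω => (τ ω : WithTop ℕ)) (k + 1) =
        fun ω => stoppedProcess M (fun ω => (τ ω : WithTop ℕ)) k ω + s.indicator D ω := by
      funext ω
      by_cases h : k + 1 ≤ τ ω
      · have h' : k ≤ τ ω := le_trans (Nat.le_succ k) h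
        have hc := stoppedProcess_eq_of_le (u := M) (τ := fun ω => (τ ω : WithTop ℕ)) (ω := ω) (i := k + 1) (WithTop.coe_le_coe.mpr h)
        have hc' := stoppedProcess_eq_of_le (u := M) (τ := fun ω => (τ ω : WithTop ℕ)) (ω := ω) (i := k) (WithTop.coe_le_coe.mpr h')
        simp [hc, hc', Set.indicator_of_mem, (show k < τ ω from h),
          hs_def, hD_def]
      · have h' : τ ω ≤ k := by omega
        have h'' : τ ω ≤ k + 1 := by omega
        have hc := stoppedProcess_eq_of_ge (u := M) (τ := fun ω => (τ ω : WithTop ℕ)) (ω := ω) (i := k + 1) (WithTop.coe_le_coe.mpr h'')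
        have hc' := stoppedProcess_eq_of_ge (u := M) (τ := fun ω => (τ ω : WithTop ℕ)) (ω := ω) (i := k) (WithTop.coe_le_coe.mpr h')
        simp [hc, hc',
          Set.indicator_of_notMem, (show ¬ k < τ ω from h), hs_def]
    -- generic computation of the conditional expectation w.r.t. a σ-algebra above ℱ k
    have comp : ∀ (m : MeasurableSpace Ω) (hm0 : m ≤ m0), ℱ k ≤ m →
        μ[stoppedProcess M (fun ω => (τ ω : WithTop ℕ)) (k + 1)|m] =ᵐ[μ]
          fun ω => stoppedProcess M (fun ω => (τ ω : WithTop ℕ)) k ω +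
            s.indicator (fun ω => (μ[M (k + 1)|m]) ω - M k ω) ω := by
      intro m hm0 hFm
      have hsm : MeasurableSet[m] s := hFm s hsF
      have hstop_sm : StronglyMeasurable[m] (stoppedProcess M (fun ω => (τ ω : WithTop ℕ)) k) :=
        (hMτ.stronglyAdapted k).mono hFm
      have hMk_sm : StronglyMeasurable[m] (M k) := ((hM_adapted k).mono hFm le_rfl).stronglyMeasurable
      calc μ[stoppedProcess M (fun ω => (τ ω : WithTop ℕ)) (k + 1)|m]
          = μ[fun ω => stoppedProcess M (fun ω => (τ ω : WithTop ℕ)) k ω + s.indicator D ω|m] := by rw [hdecomp]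
        _ =ᵐ[μ] μ[stoppedProcess M (fun ω => (τ ω : WithTop ℕ)) k|m] + μ[s.indicator D|m] :=
            condExp_add (hMτ.integrable k) hind_int m
        _ =ᵐ[μ] fun ω => stoppedProcess M (fun ω => (τ ω : WithTop ℕ)) k ω +
            s.indicator (fun ω => (μ[M (k + 1)|m]) ω - M k ω) ω := by
            have e1 := condExp_of_stronglyMeasurable hm0 hstop_sm (hMτ.integrable k)
            have e2 := condExp_indicator (μ := μ) (m := m) hD_int hsm
            have e3 := condExp_sub (μ := μ) (m := m) (hM_int (k + 1)) (hM_int k)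
            have e4 := condExp_of_stronglyMeasurable hm0 hMk_sm (hM_int k)
            filter_upwards [e2, e3] with ω hω2 hω3
            simp only [Pi.add_apply, e1]
            congr 1
            rw [hω2]
            simp only [Set.indicator_apply]
            split_ifs with h
            · have hDeq : D = M (k + 1) - M k := rfl
              rw [hDeq, hω3, Pi.sub_apply, e4]
            · rfl
    have hG := comp (𝒢 k) (𝒢.le k) (hFG k)
    have hF := comp (ℱ k) (ℱ.le k) le_rfl
    have hFmart : μ[stoppedProcess M (fun ω => (τ ω : WithTop ℕ)) (k + 1)|ℱ k] =ᵐ[μ] stoppedProcess M (fun ω => (τ ω : WithTop ℕ)) k :=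
      hMτ.condExp_ae_eq (Nat.le_succ k)
    have hexch' := hexch (k + 1) (by omega)
    simp only [Nat.add_sub_cancel] at hexch'
    filter_upwards [hG, hF, hFmart, hexch'] with ω hGω hFω hFmω hexω
    rw [hGω]
    have hzF : s.indicator (fun ω => (μ[M (k + 1)|ℱ k]) ω - M k ω) ω = 0 := by
      have := hFω ▸ hFmω
      linarith [hFω, hFmω]
    have hzG : s.indicator (fun ω => (μ[M (k + 1)|𝒢 k]) ω - M k ω) ω =
        s.indicator (fun ω => (μ[M (k + 1)|ℱ k]) ω - M k ω) ω := by
      simp only [Set.indicator_apply]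
      split_ifs with h
      · rw [hexω]
      · rfl
    rw [hzG, hzF, add_zero]
  have hadp : StronglyAdapted 𝒢 (stoppedProcess M (fun ω => (τ ω : WithTop ℕ))) := fun k => (hMτ.stronglyAdapted k).mono (hFG k)
  have hmart : Martingale (stoppedProcess M (fun ω => (τ ω : WithTop ℕ))) 𝒢 μ :=
    martingale_nat hadp (fun k => hMτ.integrable k) (fun k => (key k).symm)
  refine ⟨fun k hk => ?_, hmart⟩
  obtain ⟨j, rfl⟩ : ∃ j, k = j + 1 := ⟨k - 1, by omega⟩
  simpa using key j
end

section
/- (Identification of the causal slope in the discrete-time structural model.) Suppose Y'_J = Y'ᵇ + η₁* (T/J) Σ_{i=0}^{J-1} W'_i almost surely, where Y'ᵇ is a random variable (the baseline potential outcome) measurable with respect to σ(Ȳᵇ), and sequential exchangeability holds: E[W'_k | ℱ'_{k-1} ∨ σ(Ȳᵇ)] = E[W'_k | ℱ'_{k-1}] for all k, where Y'_{k-1} and W variables are adapted. Define f(η₁) = E[ Σ_{i=1}^J Y'_{i-1} (Y'_J − η₁ (T/J) Σ_{l=0}^{J-1} W'_l)(W'_i − E[W'_i|ℱ'_{i-1}])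 ], assuming all expectations exist and Y'_{i-1}Y'ᵇ is integrable and Y'_{i-1} is ℱ'_{i-1}-measurable with Y'ᵇ σ(Ȳᵇ)-measurable. Then f(η₁*) = 0. -/
open MeasureTheory ProbabilityTheory Filter Set

/-- Identification of the causal slope in the discrete-time structural
model.  If `Y'_J = Y'ᵇ + η₁* (T/J) Σ_{i<J} W'_i` a.s. with `Y'ᵇ` measurable with respect
to `σ(Ȳᵇ)` (a sub-σ-algebra `mYb`), and sequential exchangeability
`E[W'_k | ℱ'_{k-1} ∨ σ(Ȳᵇ)] = E[W'_k | ℱ'_{k-1}]` holds, then the orthogonalization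
moment function `f` vanishes at the true parameter: `f(η₁*) = 0`. -/
theorem causal_slope_identification
    {Ω : Type*} {m0 : MeasurableSpace Ω}
    (μ : Measure Ω) [IsProbabilityMeasure μ]
    (ℱ : Filtration ℕ m0) (J : ℕ) (hJ : 1 ≤ J) (T η₁ : ℝ)
    (W Y : ℕ → Ω → ℝ) (Yb : Ω → ℝ)
    (mYb : MeasurableSpace Ω) (hmYb : mYb ≤ m0)
    (hYb_meas : StronglyMeasurable[mYb] Yb)
    (hW_adapted : Adapted ℱ W) (hY_adapted : Adapted ℱ Y)
    (hW_int : ∀ k, Integrable (W k) μ)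
    (hstruct : ∀ᵐ ω ∂μ,
      Y J ω = Yb ω + η₁ * (T / (J : ℝ)) * ∑ i ∈ Finset.range J, W i ω)
    (hexch : ∀ k, 1 ≤ k → μ[W k|ℱ (k - 1) ⊔ mYb] =ᵐ[μ] μ[W k|ℱ (k - 1)])
    (hint : ∀ i, 1 ≤ i → i ≤ J →
      Integrable (fun ω =>
        Y (i - 1) ω * (Y J ω - η₁ * (T / (J : ℝ)) * ∑ l ∈ Finset.range J, W l ω) *
          (W i ω - (μ[W i|ℱ (i - 1)]) ω)) μ) :
    ∫ ω, (∑ i ∈ Finset.Icc 1 J,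
        Y (i - 1) ω * (Y J ω - η₁ * (T / (J : ℝ)) * ∑ l ∈ Finset.range J, W l ω) *
          (W i ω - (μ[W i|ℱ (i - 1)]) ω)) ∂μ = 0 := by
  have hint' : ∀ i ∈ Finset.Icc 1 J, Integrable (fun ω =>
      Y (i - 1) ω * (Y J ω - η₁ * (T / (J : ℝ)) * ∑ l ∈ Finset.range J, W l ω) *
        (W i ω - (μ[W i|ℱ (i - 1)]) ω)) μ := by
    intro i hi
    rw [Finset.mem_Icc] at hi
    exact hint i hi.1 hi.2
  rw [integral_finset_sum _ hint']
  refine Finset.sum_eq_zero fun i hi => ?_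
  rw [Finset.mem_Icc] at hi
  set 𝒢 : MeasurableSpace Ω := ℱ (i - 1) ⊔ mYb with h𝒢
  have h𝒢le : 𝒢 ≤ m0 := sup_le (ℱ.le _) hmYb
  haveI : SigmaFinite (μ.trim h𝒢le) := inferInstance
  -- f is the 𝒢-measurable multiplier
  set f : Ω → ℝ := fun ω => Y (i - 1) ω * Yb ω with hf_def
  set d : Ω → ℝ := fun ω => W i ω - (μ[W i|ℱ (i - 1)]) ω with hd_def
  have hf_meas : StronglyMeasurable[𝒢] f :=
    ((hY_adapted (i - 1)).stronglyMeasurable.mono le_sup_left).mul (hYb_meas.mono le_sup_right)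
  -- the integrand equals f * d a.e.
  have h_ae : (fun ω =>
      Y (i - 1) ω * (Y J ω - η₁ * (T / (J : ℝ)) * ∑ l ∈ Finset.range J, W l ω) *
        (W i ω - (μ[W i|ℱ (i - 1)]) ω)) =ᵐ[μ] f * d := by
    filter_upwards [hstruct] with ω hω
    simp only [hf_def, hd_def, Pi.mul_apply, hω]
    ring
  have hfd_int : Integrable (f * d) μ := (hint i hi.1 hi.2).congr h_ae
  have hd_int : Integrable d μ := (hW_int i).sub integrable_condExp
  -- the conditional expectation of d given 𝒢 vanishes
  have hd_cond : μ[d|𝒢] =ᵐ[μ] 0 := by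
    have h1 : μ[d|𝒢] =ᵐ[μ] μ[W i|𝒢] - μ[fun ω => (μ[W i|ℱ (i - 1)]) ω|𝒢] :=
      condExp_sub (hW_int i) integrable_condExp _
    have h2 : μ[fun ω => (μ[W i|ℱ (i - 1)]) ω|𝒢] =ᵐ[μ] μ[W i|ℱ (i - 1)] := by
      rw [condExp_of_stronglyMeasurable h𝒢le
        (stronglyMeasurable_condExp.mono le_sup_left) integrable_condExp]
    refine h1.trans ?_
    filter_upwards [hexch i hi.1, h2] with ω he hw
    simp [Pi.sub_apply, hw, ← he]
    exact sub_self _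
  -- pull-out property
  have hpull : μ[f * d|𝒢] =ᵐ[μ] f * μ[d|𝒢] :=
    condExp_mul_of_stronglyMeasurable_left hf_meas hfd_int hd_int
  have hzero : μ[f * d|𝒢] =ᵐ[μ] 0 := by
    refine hpull.trans ?_
    filter_upwards [hd_cond] with ω hω
    simp [Pi.mul_apply, hω]
  calc ∫ ω, Y (i - 1) ω * (Y J ω - η₁ * (T / (J : ℝ)) * ∑ l ∈ Finset.range J, W l ω) *
          (W i ω - (μ[W i|ℱ (i - 1)]) ω) ∂μ
      = ∫ ω, (f * d) ω ∂μ := integral_congr_ae h_ae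
    _ = ∫ ω, (μ[f * d|𝒢]) ω ∂μ := (integral_condExp h𝒢le).symm
    _ = ∫ ω, (0 : Ω → ℝ) ω ∂μ := integral_congr_ae hzero
    _ = 0 := by simp
end
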